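/- If Y = (I - AA*)^{1/2}(I - ZA*)^{-1}(Z - A)(I - A*A)^{-1/2} with ‖A‖ < 1 and ‖Z‖ < 1, then I + A*Y = (I - A*A)^{1/2}(I - A*Z)^{-1}(I - A*A)^{1/2}; in particular I + A*Y is invertible. -/

import Mathlib

set_option maxHeartbeats 1000000

open ContinuousLinearMap Polynomial

/-- Anything commuting with a selfadjoint operator `b` commutes with `cfc f b`,
via Stone–Weierstrass. -/
lemma commute_cfc_of_commute {H : Type*} [NormedAddCommGroup H] [InnerProductSpace ℂ H]
    [CompleteSpace H] (a b : H →L[ℂ] H) (hb : IsSelfAdjoint b) (hab : Commute a b)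
    (f : ℝ → ℝ) : Commute a (cfc f b) := by
  by_cases hf : ContinuousOn f (spectrum ℝ b)
  · rw [cfc_apply f b hb hf]
    set σ := spectrum ℝ b with hσ
    let Sa : Subalgebra ℝ C(σ, ℝ) :=
      (Subalgebra.centralizer ℝ {a}).comap (cfcHom hb (R := ℝ)).toAlgHom
    have hXmem : Polynomial.toContinuousMapOnAlgHom σ X ∈ Sa := by
      have hXeq : Polynomial.toContinuousMapOnAlgHom σ X
          = (ContinuousMap.id ℝ).restrict σ := by
        ext x; simp
      simp only [Sa, Subalgebra.mem_comap, StarAlgHom.coe_toAlgHom, hXeq, cfcHom_id hb]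
      rw [Subalgebra.mem_centralizer_iff]
      rintro m rfl
      have hid : (cfcHom hb (R := ℝ)) ((ContinuousMap.id ℝ).restrict σ) = b := cfcHom_id hb
      rw [hid]; exact hab.eq
    have hpoly : polynomialFunctions σ ≤ Sa := by
      rw [polynomialFunctions.eq_adjoin_X]
      exact Algebra.adjoin_le (by simpa using hXmem)
    have hclosed : IsClosed (Sa : Set C(σ, ℝ)) := by
      have h1 : IsClosed {x : H →L[ℂ] H | a * x = x * a} := by
        have : {x : H →L[ℂ] H | a * x = x * a} =
            (fun x : H →L[ℂ] H => a * x - x * a) ⁻¹' {0} := by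
          ext x; simp [sub_eq_zero]
        rw [this]
        exact isClosed_singleton.preimage (by fun_prop)
      have h2 : (Sa : Set C(σ, ℝ)) = (cfcHom hb (R := ℝ)) ⁻¹' {x | a * x = x * a} := by
        ext g
        simp only [Sa, Subalgebra.coe_comap, Set.mem_preimage, StarAlgHom.coe_toAlgHom,
          SetLike.mem_coe, Subalgebra.mem_centralizer_iff, Set.mem_singleton_iff,
          Set.mem_setOf_eq]
        constructor
        · intro h; exact h a rfl
        · rintro h m rfl; exact h
      rw [h2]
      exact h1.preimage (cfcHom_isClosedEmbedding hb).continuous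
    have htop : ∀ g : C(σ, ℝ), g ∈ Sa := by
      intro g
      have hcl := polynomialFunctions.topologicalClosure σ
      have hle : (polynomialFunctions σ).topologicalClosure ≤ Sa :=
        Subalgebra.topologicalClosure_minimal hpoly hclosed
      rw [hcl] at hle
      exact hle trivial
    have := htop ⟨σ.restrict f, hf.restrict⟩
    simp only [Sa, Subalgebra.mem_comap, StarAlgHom.coe_toAlgHom,
      Subalgebra.mem_centralizer_iff, Set.mem_singleton_iff, forall_eq] at this
    exact this
  · rw [cfc_apply_of_not_continuousOn b hf]
    exact Commute.zero_right a

/-- The product of two commuting nonnegative operators is nonnegative. -/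
lemma mul_nonneg_of_commute {H : Type*} [NormedAddCommGroup H] [InnerProductSpace ℂ H]
    [CompleteSpace H] {a b : H →L[ℂ] H} (ha : 0 ≤ a) (hb : 0 ≤ b)
    (hab : Commute a b) : 0 ≤ a * b := by
  have ha' : IsSelfAdjoint a := (((nonneg_iff_isPositive a).1 ha)).isSelfAdjoint
  set s := cfc Real.sqrt a with hs_def
  have hs : 0 ≤ s := cfc_nonneg fun x _ => Real.sqrt_nonneg x
  have hssa : IsSelfAdjoint s := ((nonneg_iff_isPositive s).1 hs).isSelfAdjoint
  have hss : s * s = a := by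
    rw [hs_def, ← cfc_mul (hf := Real.continuous_sqrt.continuousOn)
      (hg := Real.continuous_sqrt.continuousOn)]
    calc cfc (fun x => Real.sqrt x * Real.sqrt x) a
        = cfc (id : ℝ → ℝ) a :=
          cfc_congr fun x hx => Real.mul_self_sqrt (spectrum_nonneg_of_nonneg ha hx)
      _ = a := cfc_id ℝ a
  have hcs : Commute b s := commute_cfc_of_commute b a ha' hab.symm _
  have key : a * b = star s * b * s := by
    rw [hssa.star_eq, mul_assoc, hcs.eq, ← mul_assoc, hss]
  rw [key]
  exact star_left_conjugate_nonneg hb s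

/-- Let `A, Z : K → H` with `‖A‖ < 1`, `‖Z‖ < 1`.  Let
`P = (I - AA*)^{1/2}` (positive square root), `M = (I - ZA*)^{-1}`,
`S = (I - A*A)^{1/2}` (positive square root) with inverse `Q = (I - A*A)^{-1/2}`, and
`W = (I - A*Z)^{-1}`.  If `Y = (I - AA*)^{1/2}(I - ZA*)^{-1}(Z - A)(I - A*A)^{-1/2}`, then
`I + A*Y = (I - A*A)^{1/2}(I - A*Z)^{-1}(I - A*A)^{1/2}`; in particular `I + A*Y` is
invertible. -/
theorem one_add_adjoint_comp_Y_eq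
    {H K : Type*} [NormedAddCommGroup H] [InnerProductSpace ℂ H] [CompleteSpace H]
    [NormedAddCommGroup K] [InnerProductSpace ℂ K] [CompleteSpace K]
    (A Z : K →L[ℂ] H) (hA : ‖A‖ < 1) (hZ : ‖Z‖ < 1)
    (P : H →L[ℂ] H) (hP : P.IsPositive)
    (hPsq : P * P = (1 : H →L[ℂ] H) - A.comp (adjoint A))
    (M : H →L[ℂ] H)
    (hM₁ : ((1 : H →L[ℂ] H) - Z.comp (adjoint A)) * M = 1)
    (hM₂ : M * ((1 : H →L[ℂ] H) - Z.comp (adjoint A)) = 1)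
    (S Q : K →L[ℂ] K) (hS : S.IsPositive)
    (hSsq : S * S = (1 : K →L[ℂ] K) - (adjoint A).comp A)
    (hQ : Q.IsPositive) (hQS : Q * S = 1) (hSQ : S * Q = 1)
    (W : K →L[ℂ] K)
    (hW₁ : ((1 : K →L[ℂ] K) - (adjoint A).comp Z) * W = 1)
    (hW₂ : W * ((1 : K →L[ℂ] K) - (adjoint A).comp Z) = 1)
    (Y : K →L[ℂ] H) (hY : Y = P.comp (M.comp ((Z - A).comp Q))) :
    (1 : K →L[ℂ] K) + (adjoint A).comp Y = S * W * S ∧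
      IsUnit ((1 : K →L[ℂ] K) + (adjoint A).comp Y) := by
  set A' : H →L[ℂ] K := adjoint A with hA'
  -- Step 1: intertwining of squares
  have h1 : ∀ x : H, A' (P (P x)) = S (S (A' x)) := by
    intro x
    have hp := congrFun (congrArg DFunLike.coe hPsq) x
    have hs := congrFun (congrArg DFunLike.coe hSsq) (A' x)
    simp only [mul_apply_eq_comp, one_apply_eq_self, sub_apply, comp_apply] at hp hs
    rw [hp, hs, map_sub]
  -- Step 2: D P = - S D
  set D : H →L[ℂ] K := A'.comp P - S.comp A' with hD
  have h2 : D.comp P = -(S.comp D) := by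
    ext x
    simp only [hD, comp_apply, sub_apply, neg_apply, map_sub]
    rw [h1 x]
    abel
  -- Step 3: E := D* D commutes with P and E P ≤ 0 ≤ E P, P unit ⇒ D = 0
  set E : H →L[ℂ] H := (adjoint D).comp D with hE
  have hEnn : 0 ≤ E := by
    rw [nonneg_iff_isPositive]
    simpa [one_def] using isPositive_one.adjoint_conj D
  have hTnn : 0 ≤ (adjoint D).comp (S.comp D) := by
    rw [nonneg_iff_isPositive]
    exact hS.adjoint_conj D
  have hEP : E * P = -((adjoint D).comp (S.comp D)) := by
    have : E * P = (adjoint D).comp (D.comp P) := by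
      rw [mul_def, hE, ContinuousLinearMap.comp_assoc]
    rw [this, h2, comp_neg]
  have hEPle : E * P ≤ 0 := by
    rw [hEP, neg_nonpos]
    exact hTnn
  have hEPsa : IsSelfAdjoint (E * P) := by
    rw [hEP]
    exact (((nonneg_iff_isPositive _).1 hTnn).isSelfAdjoint).neg
  have hEsa : IsSelfAdjoint E := ((nonneg_iff_isPositive _).1 hEnn).isSelfAdjoint
  have hPnn : 0 ≤ P := (nonneg_iff_isPositive P).2 hP
  have hcomm : Commute E P := by
    have : star (E * P) = P * E := by
      rw [star_mul, hEsa.star_eq, hP.isSelfAdjoint.star_eq]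
    rw [Commute, SemiconjBy, ← hEPsa.star_eq, this]
  have hEPge : 0 ≤ E * P := mul_nonneg_of_commute hEnn hPnn hcomm
  have hEP0 : E * P = 0 := le_antisymm hEPle hEPge
  -- P is a unit
  have hPPunit : IsUnit (P * P) := by
    rw [hPsq]
    apply isUnit_one_sub_of_norm_lt_one
    calc ‖A.comp (adjoint A)‖ ≤ ‖A‖ * ‖adjoint A‖ := opNorm_comp_le _ _
      _ = ‖A‖ * ‖A‖ := by rw [adjoint.norm_map]
      _ < 1 := by nlinarith [norm_nonneg A]
  have hPunit : IsUnit P := by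
    obtain ⟨u, hu⟩ := hPPunit
    have hcP : Commute P ↑u := by rw [hu]; exact (Commute.refl P).mul_right (Commute.refl P)
    refine ⟨⟨P, ↑u⁻¹ * P, ?_, ?_⟩, rfl⟩
    · rw [← (hcP.units_inv_right).eq, ← mul_assoc, ← hu, Units.mul_inv]
    · rw [mul_assoc, ← hu, Units.inv_mul]
  have hE0 : E = 0 := by
    obtain ⟨v, hv⟩ := hPunit
    have : E * ↑v * ↑v⁻¹ = 0 * ↑v⁻¹ := by rw [hv, hEP0]
    simpa [mul_assoc] using this
  have hD0 : D = 0 := by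
    ext x
    have : (inner ℂ (D x) (D x) : ℂ) = 0 := by
      rw [← adjoint_inner_left D x (D x)]
      have : (adjoint D) (D x) = E x := by simp [hE]
      rw [this, hE0]
      simp
    simpa [inner_self_eq_zero] using this
  have hAP : ∀ x : H, A' (P x) = S (A' x) := by
    intro x
    have := congrFun (congrArg DFunLike.coe hD0) x
    simp only [hD, sub_apply, comp_apply, zero_apply, sub_eq_zero] at this
    exact this
  -- Step 4: A' M = W A'
  have hAZ : A'.comp ((1 : H →L[ℂ] H) - Z.comp A') =
      ((1 : K →L[ℂ] K) - A'.comp Z).comp A' := by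
    ext x; simp
  have h3 : ((1 : K →L[ℂ] K) - A'.comp Z).comp (A'.comp M) = A' := by
    rw [← ContinuousLinearMap.comp_assoc, ← hAZ, ContinuousLinearMap.comp_assoc, show ((1 : H →L[ℂ] H) - Z.comp A').comp M = 1 from hM₁]
    ext x; simp
  have hAM : A'.comp M = W.comp A' := by
    calc A'.comp M = ((1 : K →L[ℂ] K)).comp (A'.comp M) := by rw [one_def, id_comp]
      _ = (W * ((1 : K →L[ℂ] K) - A'.comp Z)).comp (A'.comp M) := by rw [hW₂]
      _ = W.comp (((1 : K →L[ℂ] K) - A'.comp Z).comp (A'.comp M)) := by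
          rw [mul_def, ContinuousLinearMap.comp_assoc]
      _ = W.comp A' := by rw [h3]
  have hAMx : ∀ x : H, A' (M x) = W (A' x) := by
    intro x
    have := congrFun (congrArg DFunLike.coe hAM) x
    simpa using this
  -- Step 5: A' Y = S W (A'Z - A'A) Q
  have hAY : A'.comp Y = S * W * (A'.comp Z - A'.comp A) * Q := by
    ext x
    simp only [hY, comp_apply, mul_apply_eq_comp, sub_apply, map_sub]
    simp only [hAP, hAMx]
  -- Step 6: key algebraic identity
  have key : S * W * S = 1 + S * W * (A'.comp Z - A'.comp A) * Q := by
    have hS' : S = (((1 : K →L[ℂ] K) - A'.comp Z) + (A'.comp Z - A'.comp A)) * Q := by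
      rw [sub_add_sub_cancel, ← hSsq, mul_assoc, hSQ, mul_one]
    nth_rewrite 2 [hS']
    have e1 : S * W * ((((1 : K →L[ℂ] K) - A'.comp Z) + (A'.comp Z - A'.comp A)) * Q)
        = S * (W * ((1 : K →L[ℂ] K) - A'.comp Z)) * Q + S * W * (A'.comp Z - A'.comp A) * Q := by
      noncomm_ring
    rw [e1, hW₂, mul_one, hSQ]
  refine ⟨by rw [hAY, key], ?_⟩
  rw [hAY, ← key]
  have hUS : IsUnit S := ⟨⟨S, Q, hSQ, hQS⟩, rfl⟩
  have hUW : IsUnit W := ⟨⟨W, (1 : K →L[ℂ] K) - A'.comp Z, hW₂, hW₁⟩, rfl⟩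
  exact (hUS.mul hUW).mul hUS
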